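/- arXiv:1304.7182 — 2 statements merged into one kernel-verified Lean document; each statement's English description precedes it below -/
import Mathlib

section
/- Let G be a finite abelian group and ν a probability measure whose support is exactly {g, h} for two elements g, h ∈ G. If the cyclic subgroup generated by g⁻¹h equals the subgroup generated by {g, h}, then ν is acyclic. -/
open Pointwise Filter Topology

private lemma pow_subset_subgroup' {G : Type*} [Group G] {s : Set G} {H : Subgroup G}
    (hsub : s ⊆ H) : ∀ n : ℕ, s ^ n ⊆ (H : Set G)
  | 0 => by
      rw [pow_zero]
      intro x hx
      rw [Set.mem_one] at hx
      exact hx ▸ H.one_mem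
  | (n+1) => by
      rw [pow_succ]
      rintro x ⟨a, ha, b, hb, rfl⟩
      exact H.mul_mem (pow_subset_subgroup' hsub n ha) (hsub hb)

/-- For a probability measure on a finite abelian group with support exactly `{g, h}`:
if the cyclic subgroup generated by `g⁻¹h` equals the subgroup generated by `{g, h}`,
then `ν` is acyclic. -/
theorem acyclic_two_point_support {G : Type*} [CommGroup G] [Fintype G]
    (ν : G → ℝ) (h0 : ∀ x, 0 ≤ ν x) (h1 : ∑ x, ν x = 1)
    (g h : G) (hgh : g ≠ h)
    (hs : {x : G | 0 < ν x} = {g, h})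
    (hcyc : Subgroup.zpowers (g⁻¹ * h) = Subgroup.closure {g, h}) :
    ∃ N : ℕ, 0 < N ∧
      {x : G | 0 < ν x} ^ N = (Subgroup.closure {x : G | 0 < ν x} : Set G) := by
  set u := g⁻¹ * h with hu
  set N := Fintype.card G with hN
  refine ⟨N, Fintype.card_pos, ?_⟩
  rw [hs]
  apply Set.Subset.antisymm
  · exact pow_subset_subgroup' Subgroup.subset_closure N
  · intro x hx
    rw [← hcyc] at hx
    obtain ⟨k, hk⟩ := mem_powers_iff_mem_zpowers.2 hx
    have hord : orderOf u ≤ N :=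
      Nat.le_of_dvd Fintype.card_pos (orderOf_dvd_card (x := u))
    have hopos : 0 < orderOf u := orderOf_pos u
    set j := k % orderOf u with hj
    have hjN : j ≤ N := le_trans (Nat.mod_lt k hopos).le hord
    have hx' : x = u ^ j := by
      rw [hj, pow_mod_orderOf]; exact hk.symm
    have key : g ^ (N - j) * h ^ j = x := by
      have hh : h = g * u := by rw [hu]; group
      rw [hx', hh, mul_pow, ← mul_assoc, ← pow_add, Nat.sub_add_cancel hjN,
        hN, pow_card_eq_one, one_mul]
    have hsplit : ({g, h} : Set G) ^ N = ({g, h} : Set G) ^ (N - j) * ({g, h} : Set G) ^ j := by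
      rw [← pow_add, Nat.sub_add_cancel hjN]
    rw [← key, hsplit]
    exact Set.mul_mem_mul (Set.pow_mem_pow (Set.mem_insert g {h}))
      (Set.pow_mem_pow (Set.mem_insert_of_mem g rfl))
end

section
/- Let G be a finite group and ν an acyclic probability measure with H = ⟨supp(ν)⟩. For every probability measure μ on G, the iterates T_ν^m(μ) = ν^m * μ converge as m → ∞ to ((1/|H|) Σ_{h∈H} δ_h) * μ. Consequently the limit point depends affinely on μ. -/
open Pointwise Filter Topology

/-- Convolution of two probability vectors on a finite group. -/
def conv {G : Type*} [Group G] [Fintype G] (p q : G → ℝ) : G → ℝ :=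
  fun g => ∑ a : G, p a * q (a⁻¹ * g)

/-- `k`-fold convolution power of a probability vector. -/
def convPow {G : Type*} [Group G] [Fintype G] [DecidableEq G] (p : G → ℝ) : ℕ → G → ℝ
  | 0 => fun g => if g = 1 then 1 else 0
  | n + 1 => conv (convPow p n) p

section Aux

set_option linter.unusedSectionVars false

variable {G : Type*} [Group G] [Fintype G] [DecidableEq G]

lemma sum_comp_mulLeft (a : G) (q : G → ℝ) : ∑ g : G, q (a * g) = ∑ g : G, q g :=
  Equiv.sum_comp (Equiv.mulLeft a) q

lemma conv_nonneg' {p q : G → ℝ} (hp : ∀ g, 0 ≤ p g) (hq : ∀ g, 0 ≤ q g) (g : G) :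
    0 ≤ conv p q g :=
  Finset.sum_nonneg fun a _ => mul_nonneg (hp a) (hq _)

lemma conv_sum_eq {p q : G → ℝ} (hp : ∑ g, p g = 1) (hq : ∑ g, q g = 1) :
    ∑ g, conv p q g = 1 := by
  unfold conv
  rw [Finset.sum_comm]
  have : ∀ a : G, ∑ g : G, p a * q (a⁻¹ * g) = p a := by
    intro a
    rw [← Finset.mul_sum, sum_comp_mulLeft a⁻¹ q, hq, mul_one]
  simp_rw [this, hp]

lemma conv_assoc (p q r : G → ℝ) : conv (conv p q) r = conv p (conv q r) := by
  funext g
  unfold conv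
  simp only [Finset.sum_mul, Finset.mul_sum]
  rw [Finset.sum_comm]
  refine Finset.sum_congr rfl fun b _ => ?_
  rw [← Equiv.sum_comp (Equiv.mulLeft b) (fun a => p b * q (b⁻¹ * a) * r (a⁻¹ * g))]
  refine Finset.sum_congr rfl fun c _ => ?_
  simp [mul_assoc, mul_inv_rev]

lemma conv_delta (p : G → ℝ) : conv p (fun g => if g = 1 then 1 else 0) = p := by
  funext g
  unfold conv
  rw [Finset.sum_eq_single g]
  · simp
  · intro b _ hb
    have hne : ¬ (b⁻¹ * g = 1) := fun h => hb (by
      have := congrArg (b * ·) h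
      simpa [mul_assoc] using this.symm)
    simp only [hne, if_false, mul_zero]
  · simp

lemma convPow_add (ν : G → ℝ) (m n : ℕ) :
    convPow ν (m + n) = conv (convPow ν m) (convPow ν n) := by
  induction n with
  | zero => rw [Nat.add_zero]; exact (conv_delta _).symm
  | succ n ih =>
      show convPow ν ((m + n) + 1) = _
      rw [convPow, ih, conv_assoc]
      rfl

lemma conv_support (p q : G → ℝ) (hp : ∀ g, 0 ≤ p g) (hq : ∀ g, 0 ≤ q g) :
    {g | 0 < conv p q g} = {g | 0 < p g} * {g | 0 < q g} := by
  ext g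
  constructor
  · intro hg
    obtain ⟨a, -, ha⟩ := Finset.exists_lt_of_sum_lt (f := fun _ : G => (0:ℝ))
      (g := fun a => p a * q (a⁻¹ * g)) (by simpa [conv] using hg)
    rcases mul_pos_iff.mp ha with ⟨h1, h2⟩ | ⟨h1, _⟩
    · exact ⟨a, h1, a⁻¹ * g, h2, by group⟩
    · exact absurd (hp a) (not_le.mpr h1)
  · rintro ⟨a, ha, b, hb, rfl⟩
    have hterm : 0 < p a * q (a⁻¹ * (a * b)) := by
      rw [inv_mul_cancel_left]; exact mul_pos ha hb
    calc (0:ℝ) < p a * q (a⁻¹ * (a * b)) := hterm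
      _ ≤ conv p q (a * b) :=
        Finset.single_le_sum (f := fun a' => p a' * q (a'⁻¹ * (a * b)))
          (fun i _ => mul_nonneg (hp i) (hq _)) (Finset.mem_univ a)

lemma convPow_nonneg {ν : G → ℝ} (h0 : ∀ g, 0 ≤ ν g) (m : ℕ) (g : G) :
    0 ≤ convPow ν m g := by
  induction m generalizing g with
  | zero => unfold convPow; positivity
  | succ n ih => exact conv_nonneg' ih h0 g

lemma convPow_sum {ν : G → ℝ} (h1 : ∑ g, ν g = 1) (m : ℕ) :
    ∑ g, convPow ν m g = 1 := by
  induction m with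
  | zero => simp [convPow]
  | succ n ih => exact conv_sum_eq ih h1

lemma convPow_support {ν : G → ℝ} (h0 : ∀ g, 0 ≤ ν g) (m : ℕ) :
    {g | 0 < convPow ν m g} = {g : G | 0 < ν g} ^ m := by
  induction m with
  | zero =>
      ext g
      simp only [convPow, pow_zero, Set.mem_one, Set.mem_setOf_eq]
      split <;> simp_all
  | succ n ih =>
      rw [pow_succ, ← ih]
      exact conv_support _ _ (convPow_nonneg h0 n) h0


open scoped Classical

lemma unif_card (H : Subgroup G) :
    ((Finset.univ.filter (· ∈ H)).card : ℝ) = (Nat.card H : ℝ) := by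
  rw [Nat.card_eq_fintype_card, Fintype.card_subtype]

lemma unif_sum (H : Subgroup G) :
    ∑ x : G, (if x ∈ H then (Nat.card H : ℝ)⁻¹ else 0) = 1 := by
  rw [Finset.sum_ite, Finset.sum_const, Finset.sum_const_zero, add_zero, nsmul_eq_mul,
    unif_card H]
  have : (0:ℝ) < (Nat.card H : ℝ) := by
    exact_mod_cast Nat.card_pos
  field_simp

lemma conv_unif_right (H : Subgroup G) (c : ℝ) (p : G → ℝ) (hp1 : ∑ x, p x = 1)
    (hps : ∀ x ∉ H, p x = 0) :
    conv p (fun x => if x ∈ H then c else 0) = (fun x => if x ∈ H then c else 0) := by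
  funext g
  unfold conv
  by_cases hg : g ∈ H
  · have : ∀ a : G, p a * (if a⁻¹ * g ∈ H then c else 0) = p a * c := by
      intro a
      by_cases hpa : p a = 0
      · simp [hpa]
      · have haH : a ∈ H := by by_contra h; exact hpa (hps a h)
        rw [if_pos (H.mul_mem (H.inv_mem haH) hg)]
    simp only [this]
    rw [← Finset.sum_mul, hp1, one_mul, if_pos hg]
  · rw [if_neg hg]
    apply Finset.sum_eq_zero
    intro a _
    by_cases hpa : p a = 0
    · simp [hpa]
    · have haH : a ∈ H := by by_contra h; exact hpa (hps a h)
      have : a⁻¹ * g ∉ H := by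
        intro h
        exact hg (by simpa [mul_inv_cancel_left] using H.mul_mem haH h)
      dsimp only
      rw [if_neg this, mul_zero]

lemma conv_unif_left (H : Subgroup G) (c : ℝ) (q : G → ℝ) (hq1 : ∑ x, q x = 1)
    (hqs : ∀ x ∉ H, q x = 0) :
    conv (fun x => if x ∈ H then c else 0) q = (fun x => if x ∈ H then c else 0) := by
  funext g
  unfold conv
  have hre : ∑ a : G, (if a ∈ H then c else 0) * q (a⁻¹ * g)
      = ∑ b : G, (if g * b⁻¹ ∈ H then c else 0) * q b := by
    rw [← Equiv.sum_comp ((Equiv.inv G).trans (Equiv.mulLeft g))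
      (fun a => (if a ∈ H then c else 0) * q (a⁻¹ * g))]
    refine Finset.sum_congr rfl fun b _ => ?_
    simp [mul_assoc, mul_inv_rev]
  rw [hre]
  by_cases hg : g ∈ H
  · have : ∀ b : G, (if g * b⁻¹ ∈ H then c else 0) * q b = c * q b := by
      intro b
      by_cases hqb : q b = 0
      · simp [hqb]
      · have hbH : b ∈ H := by by_contra h; exact hqb (hqs b h)
        rw [if_pos (H.mul_mem hg (H.inv_mem hbH))]
    simp only [this]
    rw [← Finset.mul_sum, hq1, mul_one, if_pos hg]
  · rw [if_neg hg]
    apply Finset.sum_eq_zero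
    intro b _
    by_cases hqb : q b = 0
    · simp [hqb]
    · have hbH : b ∈ H := by by_contra h; exact hqb (hqs b h)
      have : g * b⁻¹ ∉ H := by
        intro h
        exact hg (by simpa [inv_mul_cancel_right] using H.mul_mem h hbH)
      rw [if_neg this, zero_mul]

lemma conv_diff_l1 (p p' q : G → ℝ) (hq0 : ∀ x, 0 ≤ q x) :
    ∑ x, |conv p q x - conv p' q x| ≤ (∑ x, q x) * ∑ x, |p x - p' x| := by
  have hdiff : ∀ x, conv p q x - conv p' q x = ∑ a, (p a - p' a) * q (a⁻¹ * x) := by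
    intro x
    unfold conv
    rw [← Finset.sum_sub_distrib]
    exact Finset.sum_congr rfl fun a _ => (sub_mul _ _ _).symm
  calc ∑ x, |conv p q x - conv p' q x|
      ≤ ∑ x, ∑ a, |p a - p' a| * q (a⁻¹ * x) := by
        refine Finset.sum_le_sum fun x _ => ?_
        rw [hdiff]
        refine (Finset.abs_sum_le_sum_abs _ _).trans (Finset.sum_le_sum fun a _ => ?_)
        rw [abs_mul, abs_of_nonneg (hq0 _)]
    _ = ∑ a, |p a - p' a| * ∑ x, q (a⁻¹ * x) := by
        rw [Finset.sum_comm]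
        exact Finset.sum_congr rfl fun a _ => (Finset.mul_sum _ _ _).symm
    _ = ∑ a, |p a - p' a| * (∑ x, q x) := by
        exact Finset.sum_congr rfl fun a _ => by rw [sum_comp_mulLeft]
    _ = (∑ x, q x) * ∑ x, |p x - p' x| := by
        rw [← Finset.sum_mul, mul_comm]

lemma convPow_supported {ν : G → ℝ} (h0 : ∀ g, 0 ≤ ν g) (H : Subgroup G)
    (hSH : {g : G | 0 < ν g} ⊆ (H : Set G)) (m : ℕ) :
    ∀ x ∉ H, convPow ν m x = 0 := by
  induction m with
  | zero =>
      intro x hx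
      have : x ≠ 1 := fun h => hx (h ▸ H.one_mem)
      simp [convPow, this]
  | succ n ih =>
      intro x hx
      show conv (convPow ν n) ν x = 0
      apply Finset.sum_eq_zero
      intro a _
      by_cases hpa : convPow ν n a = 0
      · simp [hpa]
      · have haH : a ∈ H := by by_contra h; exact hpa (ih a h)
        by_cases hν : ν (a⁻¹ * x) = 0
        · rw [hν, mul_zero]
        · have : a⁻¹ * x ∈ (H : Set G) :=
            hSH (lt_of_le_of_ne (h0 _) (Ne.symm hν))
          exact absurd (by simpa [mul_inv_cancel_left] using H.mul_mem haH this) hx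

end Aux

open scoped Classical in
/-- For an acyclic `ν` with `H = ⟨supp ν⟩` and any probability measure `μ`, the iterates
`T_ν^m(μ) = ν^m * μ` converge to `((1/|H|) Σ_{h∈H} δ_h) * μ`; in particular the limit
depends affinely on `μ`. -/
theorem iterates_tendsto_uniform_conv {G : Type*} [Group G] [Fintype G] [DecidableEq G]
    (ν : G → ℝ) (h0 : ∀ g, 0 ≤ ν g) (h1 : ∑ g, ν g = 1)
    (H : Subgroup G) (hH : H = Subgroup.closure {g : G | 0 < ν g})
    (hacyclic : ∃ N : ℕ, 0 < N ∧ {g : G | 0 < ν g} ^ N = (H : Set G)) :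
    ∀ μ : G → ℝ, (∀ g, 0 ≤ μ g) → (∑ g, μ g = 1) →
      ∀ g : G, Filter.Tendsto (fun m => conv (convPow ν m) μ g) Filter.atTop
        (nhds (conv (fun x => if x ∈ H then (Nat.card H : ℝ)⁻¹ else 0) μ g)) := by
  intro μ hμ0 hμ1 g
  set c : ℝ := (Nat.card H : ℝ)⁻¹ with hc
  set u : G → ℝ := fun x => if x ∈ H then c else 0 with hu
  suffices hconv : ∀ a : G, Tendsto (fun m => convPow ν m a) atTop (𝓝 (u a)) by
    unfold conv
    exact tendsto_finset_sum _ fun a _ => (hconv a).mul_const _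
  obtain ⟨N, hN, hNpow⟩ := hacyclic
  have hSsubH : {g : G | 0 < ν g} ⊆ (H : Set G) := hH ▸ Subgroup.subset_closure
  have hsupp : ∀ m, ∀ x ∉ H, convPow ν m x = 0 := fun m => convPow_supported h0 H hSsubH m
  have husum : ∑ x, u x = 1 := unif_sum H
  have hu0 : ∀ x, 0 ≤ u x := by
    intro x
    rw [hu]
    dsimp only
    split
    · rw [hc]; positivity
    · exact le_refl 0
  have husupp : ∀ x ∉ H, u x = 0 := by
    intro x hx; rw [hu]; exact if_neg hx
  have hνsupp : ∀ x ∉ H, ν x = 0 := by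
    intro x hx
    by_contra hne
    exact hx (hSsubH (lt_of_le_of_ne (h0 x) (Ne.symm hne)))
  set w : G → ℝ := convPow ν N with hw
  have hw0 : ∀ x, 0 ≤ w x := convPow_nonneg h0 N
  have hwsum : ∑ x, w x = 1 := convPow_sum h1 N
  have hwsupp : ∀ x ∉ H, w x = 0 := hsupp N
  have hwpos : ∀ h ∈ H, 0 < w h := by
    intro x hx
    have : x ∈ {g | 0 < convPow ν N g} := by
      rw [convPow_support h0, hNpow]; exact hx
    exact this
  have hfilter_ne : (Finset.univ.filter (· ∈ H)).Nonempty :=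
    ⟨1, by simp [H.one_mem]⟩
  obtain ⟨h₀, hh₀, hmin⟩ := Finset.exists_min_image (Finset.univ.filter (· ∈ H)) w hfilter_ne
  have hh₀H : h₀ ∈ H := by simpa using hh₀
  set δ : ℝ := w h₀ with hδ
  have hδpos : 0 < δ := hwpos h₀ hh₀H
  have hδle : ∀ x ∈ H, δ ≤ w x := fun x hx => hmin x (by simpa using hx)
  have hcardpos : (0:ℝ) < (Nat.card H : ℝ) := by exact_mod_cast Nat.card_pos
  set ε : ℝ := δ * (Nat.card H : ℝ) with hε
  have hεpos : 0 < ε := mul_pos hδpos hcardpos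
  have hε1 : ε ≤ 1 := by
    have step1 : ε = ∑ _x ∈ Finset.univ.filter (· ∈ H), δ := by
      rw [Finset.sum_const, nsmul_eq_mul, unif_card H, hε, mul_comm]
    have step2 : ∑ _x ∈ Finset.univ.filter (· ∈ H), δ
        ≤ ∑ x ∈ Finset.univ.filter (· ∈ H), w x :=
      Finset.sum_le_sum fun x hx => hδle x (by simpa using hx)
    have step3 : ∑ x ∈ Finset.univ.filter (· ∈ H), w x ≤ ∑ x, w x :=
      Finset.sum_le_sum_of_subset_of_nonneg (Finset.filter_subset _ _)
        (fun x _ _ => hw0 x)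
    rw [step1]
    calc _ ≤ ∑ x ∈ Finset.univ.filter (· ∈ H), w x := step2
      _ ≤ ∑ x, w x := step3
      _ = 1 := hwsum
  have hεu : ∀ x, ε * u x ≤ w x := by
    intro x
    by_cases hx : x ∈ H
    · have : u x = c := by rw [hu]; exact if_pos hx
      rw [this]
      have hεc : ε * c = δ := by
        rw [hε, hc, mul_assoc, mul_inv_cancel₀ (ne_of_gt hcardpos), mul_one]
      rw [hεc]
      exact hδle x hx
    · rw [husupp x hx, mul_zero]
      exact hw0 x
  -- absorbing identities
  have hconv_p_u : ∀ p : G → ℝ, (∑ x, p x = 1) → (∀ x ∉ H, p x = 0) →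
      conv p u = u := fun p h1' h2' => conv_unif_right H c p h1' h2'
  have hconv_u_q : ∀ q : G → ℝ, (∑ x, q x = 1) → (∀ x ∉ H, q x = 0) →
      conv u q = u := fun q h1' h2' => conv_unif_left H c q h1' h2'
  -- Doeblin contraction
  have hcontr : ∀ p : G → ℝ, (∑ x, p x = 1) → (∀ x ∉ H, p x = 0) →
      ∑ x, |conv p w x - u x| ≤ (1 - ε) * ∑ x, |p x - u x| := by
    intro p hp1 hps
    set w' : G → ℝ := fun x => w x - ε * u x with hw'
    have hw'0 : ∀ x, 0 ≤ w' x := fun x => sub_nonneg.mpr (hεu x)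
    have hw'sum : ∑ x, w' x = 1 - ε := by
      rw [hw']
      rw [Finset.sum_sub_distrib, hwsum, ← Finset.mul_sum, husum, mul_one]
    have hdecomp : ∀ p' : G → ℝ, ∀ x, conv p' w x = conv p' w' x + ε * conv p' u x := by
      intro p' x
      unfold conv
      rw [Finset.mul_sum, ← Finset.sum_add_distrib]
      refine Finset.sum_congr rfl fun a _ => ?_
      rw [hw']
      dsimp only
      ring
    have key : ∀ x, conv p w x - u x = conv p w' x - conv u w' x := by
      intro x
      have e1 : conv p w x = conv p w' x + ε * u x := by
        rw [hdecomp p x, hconv_p_u p hp1 hps]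
      have e2 : u x = conv u w' x + ε * u x := by
        conv_lhs => rw [← hconv_u_q w hwsum hwsupp]
        rw [hdecomp u x, hconv_p_u u husum husupp]
      linarith [e1, e2]
    calc ∑ x, |conv p w x - u x| = ∑ x, |conv p w' x - conv u w' x| := by
          simp_rw [key]
      _ ≤ (∑ x, w' x) * ∑ x, |p x - u x| := conv_diff_l1 p u w' hw'0
      _ = (1 - ε) * ∑ x, |p x - u x| := by rw [hw'sum]
  -- distance to uniform
  set D : ℕ → ℝ := fun m => ∑ x, |convPow ν m x - u x| with hD
  have hD0 : ∀ m, 0 ≤ D m := fun m => Finset.sum_nonneg fun x _ => abs_nonneg _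
  have hDanti : Antitone D := by
    apply antitone_nat_of_succ_le
    intro n
    have hcu : conv u ν = u := hconv_u_q ν h1 hνsupp
    calc D (n + 1) = ∑ x, |conv (convPow ν n) ν x - conv u ν x| := by
          rw [hcu]; rfl
      _ ≤ (∑ x, ν x) * ∑ x, |convPow ν n x - u x| := conv_diff_l1 _ _ _ h0
      _ = D n := by rw [h1, one_mul]
  have hD0le : D 0 ≤ 2 := by
    have : ∀ x, |convPow ν 0 x - u x| ≤ convPow ν 0 x + u x := fun x =>
      (abs_sub _ _).trans (by rw [abs_of_nonneg (convPow_nonneg h0 0 x), abs_of_nonneg (hu0 x)])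
    calc D 0 ≤ ∑ x, (convPow ν 0 x + u x) := Finset.sum_le_sum fun x _ => this x
      _ = 2 := by rw [Finset.sum_add_distrib, convPow_sum h1 0, husum]; norm_num
  have hkey : ∀ k, D (N * k) ≤ 2 * (1 - ε) ^ k := by
    intro k
    induction k with
    | zero => simpa using hD0le
    | succ k ih =>
        have heq : convPow ν (N * (k + 1)) = conv (convPow ν (N * k)) w := by
          rw [Nat.mul_succ, convPow_add]
        have : D (N * (k + 1)) ≤ (1 - ε) * D (N * k) := by
          rw [hD]
          dsimp only
          rw [heq]
          exact hcontr (convPow ν (N * k)) (convPow_sum h1 _) (hsupp _)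
        calc D (N * (k + 1)) ≤ (1 - ε) * D (N * k) := this
          _ ≤ (1 - ε) * (2 * (1 - ε) ^ k) :=
            mul_le_mul_of_nonneg_left ih (by linarith)
          _ = 2 * (1 - ε) ^ (k + 1) := by ring
  have hbound : ∀ m, D m ≤ 2 * (1 - ε) ^ (m / N) := by
    intro m
    have h1' : N * (m / N) ≤ m := by
      rw [mul_comm]; exact Nat.div_mul_le_self m N
    exact (hDanti h1').trans (hkey (m / N))
  have htends0 : Tendsto (fun m : ℕ => 2 * (1 - ε) ^ (m / N)) atTop (𝓝 0) := by
    have hdiv : Tendsto (fun m : ℕ => m / N) atTop atTop :=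
      tendsto_atTop_atTop.mpr fun b =>
        ⟨b * N, fun a ha => (Nat.le_div_iff_mul_le hN).mpr ha⟩
    have hp : Tendsto (fun k : ℕ => (1 - ε) ^ k) atTop (𝓝 0) :=
      tendsto_pow_atTop_nhds_zero_of_lt_one (by linarith) (by linarith)
    have := (hp.comp hdiv).const_mul 2
    simpa using this
  have hDto0 : Tendsto D atTop (𝓝 0) := squeeze_zero hD0 hbound htends0
  intro a
  rw [tendsto_iff_dist_tendsto_zero]
  simp only [Real.dist_eq]
  refine squeeze_zero (fun m => abs_nonneg _) (fun m => ?_) hDto0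
  exact Finset.single_le_sum (f := fun x => |convPow ν m x - u x|)
    (fun i _ => abs_nonneg _) (Finset.mem_univ a)
end
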